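/- Let ρ be the density and τ the kernel of a finite-rank projection P = Σₖ|φₖ⟩⟨φₖ| with orthonormal φₖ ∈ L²(ℝ³). Then the direct-minus-exchange operator U_P − K_P ≥ 0, where U_P is multiplication by (ρ * 2/|·|) and (K_P ψ)(x) = ∫(2/|x−y|)τ(x,y)ψ(y)dy. -/

import Mathlib

open MeasureTheory
open scoped ComplexConjugate

lemma key_alg (N : ℕ) (a b : Fin N → ℂ) (u v : ℂ) (c : ℝ) (hc : 0 ≤ c) :
    0 ≤ ((c:ℂ) * ((((∑ k, ‖b k‖ ^ 2) * ‖u‖ ^ 2 : ℝ) : ℂ)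
            - conj u * (∑ k, a k * conj (b k)) * v)
        + (c:ℂ) * ((((∑ k, ‖a k‖ ^ 2) * ‖v‖ ^ 2 : ℝ) : ℂ)
            - conj v * (∑ k, b k * conj (a k)) * u)).re := by
  have h : (c:ℂ) * ((((∑ k, ‖b k‖ ^ 2) * ‖u‖ ^ 2 : ℝ) : ℂ)
            - conj u * (∑ k, a k * conj (b k)) * v)
        + (c:ℂ) * ((((∑ k, ‖a k‖ ^ 2) * ‖v‖ ^ 2 : ℝ) : ℂ)
            - conj v * (∑ k, b k * conj (a k)) * u)
      = ((c * ∑ k, ‖b k * u - a k * v‖ ^ 2 : ℝ) : ℂ) := by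
    push_cast
    simp only [← Complex.mul_conj', map_sub, map_mul, Finset.mul_sum, Finset.sum_mul,
      mul_sub]
    rw [← Finset.sum_sub_distrib, ← Finset.sum_sub_distrib, ← Finset.sum_add_distrib]
    exact Finset.sum_congr rfl fun k _ => by ring
  rw [h, Complex.ofReal_re]
  positivity

/-- Let `ρ(x) = Σₖ |φₖ(x)|²` be the density and `τ(x,y) = Σₖ φₖ(x) conj(φₖ(y))` the
kernel of the finite-rank projection `P = Σₖ |φₖ⟩⟨φₖ|` with `(φₖ)` orthonormal in
`L²(ℝ³)`. Then the direct-minus-exchange operator `U_P - K_P` is nonnegative: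
`⟨ψ, (U_P - K_P)ψ⟩ ≥ 0` for every `ψ` in its form domain. -/
theorem stmt14 (N : ℕ) (φ : Fin N → EuclideanSpace ℝ (Fin 3) → ℂ)
    (hmem : ∀ k, MemLp (φ k) 2 (volume : Measure (EuclideanSpace ℝ (Fin 3))))
    (horth : ∀ k l, ∫ x, conj (φ k x) * φ l x
        ∂(volume : Measure (EuclideanSpace ℝ (Fin 3))) = if k = l then 1 else 0)
    (ψ : EuclideanSpace ℝ (Fin 3) → ℂ)
    (hψ : MemLp ψ 2 (volume : Measure (EuclideanSpace ℝ (Fin 3))))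
    (hint : Integrable
      (fun p : EuclideanSpace ℝ (Fin 3) × EuclideanSpace ℝ (Fin 3) =>
        ((2 / ‖p.1 - p.2‖ : ℝ) : ℂ) *
          ((((∑ k, ‖φ k p.2‖ ^ 2) * ‖ψ p.1‖ ^ 2 : ℝ) : ℂ)
            - conj (ψ p.1) * (∑ k, φ k p.1 * conj (φ k p.2)) * ψ p.2))
      (volume : Measure (EuclideanSpace ℝ (Fin 3) × EuclideanSpace ℝ (Fin 3)))) :
    0 ≤ (∫ p : EuclideanSpace ℝ (Fin 3) × EuclideanSpace ℝ (Fin 3),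
        ((2 / ‖p.1 - p.2‖ : ℝ) : ℂ) *
          ((((∑ k, ‖φ k p.2‖ ^ 2) * ‖ψ p.1‖ ^ 2 : ℝ) : ℂ)
            - conj (ψ p.1) * (∑ k, φ k p.1 * conj (φ k p.2)) * ψ p.2)).re := by
  set F : EuclideanSpace ℝ (Fin 3) × EuclideanSpace ℝ (Fin 3) → ℂ := fun p =>
      ((2 / ‖p.1 - p.2‖ : ℝ) : ℂ) *
        ((((∑ k, ‖φ k p.2‖ ^ 2) * ‖ψ p.1‖ ^ 2 : ℝ) : ℂ)
          - conj (ψ p.1) * (∑ k, φ k p.1 * conj (φ k p.2)) * ψ p.2) with hF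
  have hswap : Integrable (fun p : EuclideanSpace ℝ (Fin 3) × EuclideanSpace ℝ (Fin 3) =>
      F p.swap) volume := by
    rw [Measure.volume_eq_prod] at hint ⊢
    exact hint.swap
  have hswapint : (∫ p : EuclideanSpace ℝ (Fin 3) × EuclideanSpace ℝ (Fin 3), F p.swap)
      = ∫ p : EuclideanSpace ℝ (Fin 3) × EuclideanSpace ℝ (Fin 3), F p := by
    rw [Measure.volume_eq_prod]
    exact integral_prod_swap F
  have e1 : (∫ p : EuclideanSpace ℝ (Fin 3) × EuclideanSpace ℝ (Fin 3), (F p).re)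
      = (∫ p, F p).re := by
    simpa [RCLike.re_to_complex] using integral_re hint
  have e2 : (∫ p : EuclideanSpace ℝ (Fin 3) × EuclideanSpace ℝ (Fin 3), (F p.swap).re)
      = (∫ p : EuclideanSpace ℝ (Fin 3) × EuclideanSpace ℝ (Fin 3), F p.swap).re := by
    simpa [RCLike.re_to_complex] using integral_re hswap
  have key : ∀ p : EuclideanSpace ℝ (Fin 3) × EuclideanSpace ℝ (Fin 3),
      0 ≤ (F p).re + (F p.swap).re := by
    intro p
    have hc : (0:ℝ) ≤ 2 / ‖p.1 - p.2‖ := by positivity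
    have h := key_alg N (fun k => φ k p.1) (fun k => φ k p.2) (ψ p.1) (ψ p.2)
      (2 / ‖p.1 - p.2‖) hc
    rw [Complex.add_re] at h
    simpa [hF, Prod.swap, norm_sub_rev p.1 p.2] using h
  have h2 : 0 ≤ ∫ p : EuclideanSpace ℝ (Fin 3) × EuclideanSpace ℝ (Fin 3),
      ((F p).re + (F p.swap).re) := integral_nonneg key
  have h3 : (∫ p : EuclideanSpace ℝ (Fin 3) × EuclideanSpace ℝ (Fin 3),
      ((F p).re + (F p.swap).re))
      = (∫ p : EuclideanSpace ℝ (Fin 3) × EuclideanSpace ℝ (Fin 3), (F p).re)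
      + (∫ p : EuclideanSpace ℝ (Fin 3) × EuclideanSpace ℝ (Fin 3), (F p.swap).re) :=
    integral_add hint.re hswap.re
  rw [h3, e1, e2, hswapint] at h2
  linarith
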